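/- arXiv:2304.05318 — 2 statements merged into one kernel-verified Lean document; each statement's English description precedes it below -/
import Mathlib

section
/- For n ≥ 5, in the flip graph D_n on pairs of disjoint triangulations of an n-gon, flipping at a diagonal (a,b) of T1 and flipping at a diagonal (c,d) of T2 cannot produce the same resulting pair (T1', T2'); otherwise both triangulations T1 and T2 would contain the quadrilateral (a,c,b,d) and hence share a diagonal, a contradiction. -/
/-- A diagonal of the convex `n`-gon: an unordered pair of distinct,
non-adjacent vertices (vertices labeled by `Fin n` in cyclic order). -/
def IsDiag (n : ℕ) (d : Sym2 (Fin n)) : Prop :=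
  ∃ a b : Fin n, d = s(a, b) ∧ a ≠ b ∧
    (a.val + 1) % n ≠ b.val ∧ (b.val + 1) % n ≠ a.val

/-- Two diagonals of the convex `n`-gon cross (their endpoints strictly
interleave around the polygon). -/
def Crosses (n : ℕ) (d e : Sym2 (Fin n)) : Prop :=
  (∃ a b c c' : Fin n, d = s(a, b) ∧ e = s(c, c') ∧ a < c ∧ c < b ∧ b < c') ∨
  (∃ a b c c' : Fin n, e = s(a, b) ∧ d = s(c, c') ∧ a < c ∧ c < b ∧ b < c')

/-- A triangulation of the convex `n`-gon: a maximal set of pairwise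
noncrossing diagonals. -/
structure Triangulation (n : ℕ) where
  diags : Finset (Sym2 (Fin n))
  isDiag : ∀ d ∈ diags, IsDiag n d
  noncross : ∀ d ∈ diags, ∀ e ∈ diags, ¬ Crosses n d e
  maximal : ∀ d, IsDiag n d → (∀ e ∈ diags, ¬ Crosses n d e) → d ∈ diags

/-- `IsFlip T d T'` : the triangulation `T'` is obtained from `T` by flipping
the diagonal `d` (removing `d`, keeping all other diagonals, and inserting the
opposite diagonal of the resulting quadrilateral). -/
def IsFlip {n : ℕ} (T : Triangulation n) (d : Sym2 (Fin n)) (T' : Triangulation n) : Prop :=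
  d ∈ T.diags ∧ d ∉ T'.diags ∧ ∀ e ∈ T.diags, e ≠ d → e ∈ T'.diags

/-- Two triangulations are related by a single diagonal flip. -/
def FlipAdj {n : ℕ} (T T' : Triangulation n) : Prop := ∃ d, IsFlip T d T'

/-- `d'` is the new diagonal created when passing from `T` to `T'`. -/
def NewDiag {n : ℕ} (T T' : Triangulation n) (d' : Sym2 (Fin n)) : Prop :=
  d' ∈ T'.diags ∧ d' ∉ T.diags

/-- Flip of a pair of triangulations at a diagonal of the first coordinate:
flip it there, and if the new diagonal lies in the second triangulation,
flip it there as well. -/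
def PairFlipFst {n : ℕ} (p q : Triangulation n × Triangulation n) : Prop :=
  ∃ d T₁' d', IsFlip p.1 d T₁' ∧ NewDiag p.1 T₁' d' ∧
    ((d' ∉ p.2.diags ∧ q = (T₁', p.2)) ∨
     (d' ∈ p.2.diags ∧ ∃ T₂', IsFlip p.2 d' T₂' ∧ q = (T₁', T₂')))

/-- Flip of a pair of triangulations at a diagonal of the second coordinate. -/
def PairFlipSnd {n : ℕ} (p q : Triangulation n × Triangulation n) : Prop :=
  ∃ d T₂' d', IsFlip p.2 d T₂' ∧ NewDiag p.2 T₂' d' ∧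
    ((d' ∉ p.1.diags ∧ q = (p.1, T₂')) ∨
     (d' ∈ p.1.diags ∧ ∃ T₁', IsFlip p.1 d' T₁' ∧ q = (T₁', T₂')))

/-- The flip operation on ordered pairs of triangulations. -/
def PairFlip {n : ℕ} (p q : Triangulation n × Triangulation n) : Prop :=
  PairFlipFst p q ∨ PairFlipSnd p q

/-- Vertices of the flip graph `D_n`: ordered pairs of triangulations of the
convex `n`-gon sharing no diagonal. -/
def DVert (n : ℕ) := {p : Triangulation n × Triangulation n // Disjoint p.1.diags p.2.diags}

/-- The flip graph `D_n` on ordered pairs of disjoint triangulations. -/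
def DGraph (n : ℕ) : SimpleGraph (DVert n) where
  Adj p q := p ≠ q ∧ (PairFlip p.1 q.1 ∨ PairFlip q.1 p.1)
  symm := ⟨fun _ _ h => ⟨h.1.symm, h.2.symm⟩⟩
  loopless := ⟨fun _ h => h.1 rfl⟩

/-- The flip graph `T_n` on all triangulations of the convex `n`-gon. -/
def TriGraph (n : ℕ) : SimpleGraph (Triangulation n) where
  Adj T T' := T ≠ T' ∧ (FlipAdj T T' ∨ FlipAdj T' T)
  symm := ⟨fun _ _ h => ⟨h.1.symm, h.2.symm⟩⟩
  loopless := ⟨fun _ h => h.1 rfl⟩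

/-- Vertices of `T_n(S)`: triangulations disjoint from `S`. -/
def TnSVert (n : ℕ) (S : Triangulation n) := {T : Triangulation n // Disjoint T.diags S.diags}

/-- The flip graph `T_n(S)` induced on triangulations disjoint from `S`. -/
def TnS (n : ℕ) (S : Triangulation n) : SimpleGraph (TnSVert n S) where
  Adj T T' := T ≠ T' ∧ (FlipAdj T.1 T'.1 ∨ FlipAdj T'.1 T.1)
  symm := ⟨fun _ _ h => ⟨h.1.symm, h.2.symm⟩⟩
  loopless := ⟨fun _ h => h.1 rfl⟩

lemma crosses_iff {n : ℕ} (x y u v : Fin n) :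
    Crosses n s(x,y) s(u,v) ↔
      ((x<u ∧ u<y ∧ y<v) ∨ (x<v ∧ v<y ∧ y<u) ∨ (y<u ∧ u<x ∧ x<v) ∨ (y<v ∧ v<x ∧ x<u) ∨
       (u<x ∧ x<v ∧ v<y) ∨ (u<y ∧ y<v ∧ v<x) ∨ (v<x ∧ x<u ∧ u<y) ∨ (v<y ∧ y<u ∧ u<x)) := by
  constructor
  · intro h
    unfold Crosses at h
    rcases h with ⟨a,b,c,c',hd,he,h1,h2,h3⟩ | ⟨a,b,c,c',hd,he,h1,h2,h3⟩ <;>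
    · rw [Sym2.eq_iff] at hd he
      rcases hd with ⟨rfl,rfl⟩|⟨rfl,rfl⟩ <;> rcases he with ⟨rfl,rfl⟩|⟨rfl,rfl⟩ <;>
        simp only [Fin.lt_def] at * <;> omega
  · intro h
    unfold Crosses
    rcases h with ⟨h1,h2,h3⟩|⟨h1,h2,h3⟩|⟨h1,h2,h3⟩|⟨h1,h2,h3⟩|⟨h1,h2,h3⟩|⟨h1,h2,h3⟩|⟨h1,h2,h3⟩|⟨h1,h2,h3⟩
    · exact Or.inl ⟨x,y,u,v,rfl,rfl,h1,h2,h3⟩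
    · exact Or.inl ⟨x,y,v,u,rfl,Sym2.eq_swap,h1,h2,h3⟩
    · exact Or.inl ⟨y,x,u,v,Sym2.eq_swap,rfl,h1,h2,h3⟩
    · exact Or.inl ⟨y,x,v,u,Sym2.eq_swap,Sym2.eq_swap,h1,h2,h3⟩
    · exact Or.inr ⟨u,v,x,y,rfl,rfl,h1,h2,h3⟩
    · exact Or.inr ⟨u,v,y,x,rfl,Sym2.eq_swap,h1,h2,h3⟩
    · exact Or.inr ⟨v,u,x,y,Sym2.eq_swap,rfl,h1,h2,h3⟩
    · exact Or.inr ⟨v,u,y,x,Sym2.eq_swap,Sym2.eq_swap,h1,h2,h3⟩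

lemma crosses_iff' {n : ℕ} (x y u v : Fin n) (hxy : x < y) (huv : u ≤ v) :
    Crosses n s(x,y) s(u,v) ↔ ((x<u ∧ u<y ∧ y<v) ∨ (u<x ∧ x<v ∧ v<y)) := by
  rw [crosses_iff]
  constructor
  · rintro (h|h|h|h|h|h|h|h) <;>
      simp only [Fin.lt_def, Fin.le_def] at * <;> omega
  · rintro (h|h) <;> simp only [Fin.lt_def, Fin.le_def] at * <;> omega

lemma sides_lemma_sorted {n : ℕ} (A C B C' : Fin n) (hAC : A < C) (hCB : C < B)
    (hBC' : B < C') (u v : Fin n) (huv : u ≤ v)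
    (hf : (¬ Crosses n s(A,B) s(u,v) ∧ ¬ Crosses n s(C,C') s(u,v)) ∨
      s(u,v) = s(A,B) ∨ s(u,v) = s(C,C')) :
    ¬ Crosses n s(A,C) s(u,v) ∧ ¬ Crosses n s(C,B) s(u,v) ∧ ¬ Crosses n s(B,C') s(u,v) ∧
      ¬ Crosses n s(A,C') s(u,v) := by
  have hAB : A < B := hAC.trans hCB
  have hCC' : C < C' := hCB.trans hBC'
  have hAC'' : A < C' := hAB.trans hBC'
  rw [crosses_iff' A C u v hAC huv, crosses_iff' C B u v hCB huv,
    crosses_iff' B C' u v hBC' huv, crosses_iff' A C' u v hAC'' huv]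
  rcases hf with ⟨hc1, hc2⟩ | h | h
  · rw [crosses_iff' A B u v hAB huv] at hc1
    rw [crosses_iff' C C' u v hCC' huv] at hc2
    simp only [Fin.lt_def] at *
    exact ⟨by omega, by omega, by omega, by omega⟩
  · rw [Sym2.eq_iff] at h
    simp only [Fin.ext_iff] at h
    simp only [Fin.lt_def] at *
    exact ⟨by omega, by omega, by omega, by omega⟩
  · rw [Sym2.eq_iff] at h
    simp only [Fin.ext_iff] at h
    simp only [Fin.lt_def] at *
    exact ⟨by omega, by omega, by omega, by omega⟩

lemma sides_lemma {n : ℕ} (A C B C' : Fin n) (hAC : A < C) (hCB : C < B) (hBC' : B < C')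
    (f : Sym2 (Fin n))
    (hf : (¬ Crosses n s(A,B) f ∧ ¬ Crosses n s(C,C') f) ∨ f = s(A,B) ∨ f = s(C,C')) :
    ¬ Crosses n s(A,C) f ∧ ¬ Crosses n s(C,B) f ∧ ¬ Crosses n s(B,C') f ∧
      ¬ Crosses n s(A,C') f := by
  induction f using Sym2.ind with
  | _ u v =>
    rcases le_total u v with huv | huv
    · exact sides_lemma_sorted A C B C' hAC hCB hBC' u v huv hf
    · rw [show s(u,v) = s(v,u) from Sym2.eq_swap] at hf ⊢
      exact sides_lemma_sorted A C B C' hAC hCB hBC' v u huv hf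

lemma mod_adj {n x y : ℕ} (hx : x < y) (hy : y < n)
    (h : (x + 1) % n = y ∨ (y + 1) % n = x) : y = x + 1 ∨ (x = 0 ∧ y + 1 = n) := by
  rcases h with h | h
  · rw [Nat.mod_eq_of_lt (by omega)] at h; omega
  · rcases Nat.lt_or_ge (y + 1) n with hl | hl
    · rw [Nat.mod_eq_of_lt hl] at h; omega
    · have hyn : y + 1 = n := by omega
      rw [hyn, Nat.mod_self] at h; omega

lemma quad_aux {n : ℕ} (hn : 5 ≤ n) (T1 T2 T1' T2' : Triangulation n)
    (hdisj : Disjoint T1.diags T2.diags) (d d' : Sym2 (Fin n))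
    (hd1 : d ∈ T1.diags) (hd'2 : d' ∈ T2.diags)
    (hsub1 : ∀ e ∈ T1.diags, e ≠ d → e ∈ T1'.diags) (hd'1' : d' ∈ T1'.diags)
    (hsub2 : ∀ e ∈ T2.diags, e ≠ d' → e ∈ T2'.diags) (hd2' : d ∈ T2'.diags)
    (A C B C' : Fin n) (hAC : A < C) (hCB : C < B) (hBC' : B < C')
    (hd : d = s(A,B)) (hd' : d' = s(C,C')) : False := by
  have hmem : ∀ f : Sym2 (Fin n), (f ∈ T1.diags ∨ f ∈ T2.diags) →
      (¬ Crosses n s(A,B) f ∧ ¬ Crosses n s(C,C') f) ∨ f = s(A,B) ∨ f = s(C,C') := by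
    intro f hf
    rcases hf with hf | hf
    · by_cases hfd : f = d
      · exact Or.inr (Or.inl (hfd.trans hd))
      · refine Or.inl ⟨?_, ?_⟩
        · have h := T1.noncross d hd1 f hf; rwa [hd] at h
        · have h := T1'.noncross d' hd'1' f (hsub1 f hf hfd); rwa [hd'] at h
    · by_cases hfd : f = d'
      · exact Or.inr (Or.inr (hfd.trans hd'))
      · refine Or.inl ⟨?_, ?_⟩
        · have h := T2'.noncross d hd2' f (hsub2 f hf hfd); rwa [hd] at h
        · have h := T2.noncross d' hd'2 f hf; rwa [hd'] at h
  have hboth : ∀ X Y : Fin n, X < Y →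
      (∀ f : Sym2 (Fin n), (f ∈ T1.diags ∨ f ∈ T2.diags) → ¬ Crosses n s(X,Y) f) →
      (X.val + 1) % n = Y.val ∨ (Y.val + 1) % n = X.val := by
    intro X Y hXY h
    by_contra hc
    push_neg at hc
    have hdg : IsDiag n s(X,Y) := ⟨X, Y, rfl, ne_of_lt hXY, hc.1, hc.2⟩
    exact Finset.disjoint_left.mp hdisj
      (T1.maximal _ hdg fun e he => h e (Or.inl he))
      (T2.maximal _ hdg fun e he => h e (Or.inr he))
  have a1 := hboth A C hAC (fun f hf => (sides_lemma A C B C' hAC hCB hBC' f (hmem f hf)).1)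
  have a2 := hboth C B hCB (fun f hf => (sides_lemma A C B C' hAC hCB hBC' f (hmem f hf)).2.1)
  have a3 := hboth B C' hBC' (fun f hf => (sides_lemma A C B C' hAC hCB hBC' f (hmem f hf)).2.2.1)
  have a4 := hboth A C' (hAC.trans (hCB.trans hBC'))
    (fun f hf => (sides_lemma A C B C' hAC hCB hBC' f (hmem f hf)).2.2.2)
  have hC' := C'.isLt
  rw [Fin.lt_def] at hAC hCB hBC'
  have b1 := mod_adj hAC (by omega) a1
  have b2 := mod_adj hCB (by omega) a2
  have b3 := mod_adj hBC' hC' a3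
  have b4 := mod_adj (show A.val < C'.val by omega) hC' a4
  omega

lemma main_aux {n : ℕ} (hn : 5 ≤ n) (T1 T2 T1' T2' : Triangulation n)
    (hdisj : Disjoint T1.diags T2.diags) (d d' : Sym2 (Fin n))
    (hd1 : d ∈ T1.diags) (hd'2 : d' ∈ T2.diags)
    (hsub1 : ∀ e ∈ T1.diags, e ≠ d → e ∈ T1'.diags) (hd'1' : d' ∈ T1'.diags)
    (hsub2 : ∀ e ∈ T2.diags, e ≠ d' → e ∈ T2'.diags) (hd2' : d ∈ T2'.diags) : False := by
  have hcr : Crosses n d d' := by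
    by_contra hnc
    have hdm : d ∈ T2.diags := T2.maximal d (T1.isDiag d hd1) (fun e he => by
      by_cases h : e = d'
      · rw [h]; exact hnc
      · exact T2'.noncross d hd2' e (hsub2 e he h))
    exact Finset.disjoint_left.mp hdisj hd1 hdm
  unfold Crosses at hcr
  rcases hcr with ⟨A,B,C,C',hd,hd',h1,h2,h3⟩ | ⟨A,B,C,C',hd',hd,h1,h2,h3⟩
  · exact quad_aux hn T1 T2 T1' T2' hdisj d d' hd1 hd'2 hsub1 hd'1' hsub2 hd2'
      A C B C' h1 h2 h3 hd hd'
  · exact quad_aux hn T2 T1 T2' T1' hdisj.symm d' d hd'2 hd1 hsub2 hd2' hsub1 hd'1'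
      A C B C' h1 h2 h3 hd' hd

/-- For `n ≥ 5`, flipping a pair of disjoint triangulations at
a diagonal of the first triangulation and flipping it at a diagonal of the
second triangulation can never produce the same resulting pair. -/
theorem pairFlipFst_ne_pairFlipSnd (n : ℕ) (hn : 5 ≤ n)
    (p q q' : Triangulation n × Triangulation n)
    (hdisj : Disjoint p.1.diags p.2.diags)
    (h1 : PairFlipFst p q) (h2 : PairFlipSnd p q') :
    q ≠ q' := by
  intro hqq
  obtain ⟨d, T₁', d', hflip1, hnew1, hcase1⟩ := h1
  obtain ⟨e, T₂', e', hflip2, hnew2, hcase2⟩ := h2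
  rcases hcase1 with ⟨hd'np2, rfl⟩ | ⟨hd'p2, T2a, hflipA, rfl⟩
  · rcases hcase2 with ⟨he'np1, rfl⟩ | ⟨he'p1, T1b, hflipB, rfl⟩ <;>
      simp only [Prod.mk.injEq] at hqq
    · exact hflip2.2.1 (by rw [← hqq.2]; exact hflip2.1)
    · exact hflip2.2.1 (by rw [← hqq.2]; exact hflip2.1)
  · rcases hcase2 with ⟨he'np1, rfl⟩ | ⟨he'p1, T1b, hflipB, rfl⟩ <;>
      simp only [Prod.mk.injEq] at hqq
    · exact hflip1.2.1 (by rw [hqq.1]; exact hflip1.1)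
    · have he'd : e' = d := by
        by_contra hne
        have h' : e' ∉ T₁'.diags := by rw [hqq.1]; exact hflipB.2.1
        exact h' (hflip1.2.2 e' he'p1 hne)
      have hed' : e = d' := by
        by_contra hne
        have h' : e ∉ T2a.diags := by rw [hqq.2]; exact hflip2.2.1
        exact h' (hflipA.2.2 e hflip2.1 hne)
      have hd2a : d ∈ T2a.diags := by rw [hqq.2, ← he'd]; exact hnew2.1
      exact main_aux hn p.1 p.2 T₁' T2a hdisj d d' hflip1.1 hd'p2 hflip1.2.2 hnew1.1
        hflipA.2.2 hd2a
end

section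
/- Let n ≥ 5 and let S be a triangulation of a convex n-gon containing the diagonal (2,n) (with vertices labeled 1,…,n). Let Δ be the fan triangulation {(1,i) : 3 ≤ i ≤ n−1}. Then every triangulation T disjoint from S containing exactly d diagonals of the form (1,i) is connected to Δ in the flip graph of triangulations disjoint from S by a path of length at most n−3−d, where each flip along the path produces a triangulation still disjoint from S. -/
-- auxiliary lemmas
lemma crosses_comm {n : ℕ} {d e : Sym2 (Fin n)} (h : Crosses n d e) : Crosses n e d :=
  h.elim Or.inr Or.inl

lemma crosses_of {n : ℕ} {u v x y : Fin n} (h1 : u < x) (h2 : x < v) (h3 : v < y) :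
    Crosses n s(u,v) s(x,y) := Or.inl ⟨u,v,x,y,rfl,rfl,h1,h2,h3⟩

lemma crosses_elim {n : ℕ} {u v x y : Fin n} (h : Crosses n s(u,v) s(x,y))
    (huv : u < v) (hxy : x < y) :
    (u.val < x.val ∧ x.val < v.val ∧ v.val < y.val) ∨
    (x.val < u.val ∧ u.val < y.val ∧ y.val < v.val) := by
  rcases h with ⟨a,b,c,c',hd,he,h1,h2,h3⟩ | ⟨a,b,c,c',he,hd,h1,h2,h3⟩ <;>
  · rw [Sym2.eq_iff] at hd he
    rw [Fin.lt_def] at huv hxy h1 h2 h3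
    rcases hd with ⟨rfl,rfl⟩|⟨rfl,rfl⟩ <;> rcases he with ⟨rfl,rfl⟩|⟨rfl,rfl⟩ <;> omega

lemma isDiag_sorted {n : ℕ} {d : Sym2 (Fin n)} (h : IsDiag n d) :
    ∃ x y : Fin n, d = s(x,y) ∧ x.val + 2 ≤ y.val ∧ (y.val = n - 1 → 1 ≤ x.val) := by
  obtain ⟨a,b,rfl,hab,h1,h2⟩ := h
  have hbn := b.isLt; have han := a.isLt
  have hne : a.val ≠ b.val := fun h => hab (Fin.ext h)
  rcases lt_or_gt_of_ne hne with hlt | hlt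
  · refine ⟨a, b, rfl, ?_, ?_⟩
    · have : (a.val + 1) % n = a.val + 1 := Nat.mod_eq_of_lt (by omega)
      omega
    · intro hy
      have : (b.val + 1) % n = 0 := by rw [hy]; simp [Nat.sub_add_cancel (by omega : 1 ≤ n)]
      omega
  · refine ⟨b, a, Sym2.eq_swap, ?_, ?_⟩
    · have : (b.val + 1) % n = b.val + 1 := Nat.mod_eq_of_lt (by omega)
      omega
    · intro hy
      have : (a.val + 1) % n = 0 := by rw [hy]; simp [Nat.sub_add_cancel (by omega : 1 ≤ n)]
      omega

lemma isDiag_of {n : ℕ} {x y : Fin n} (h1 : x.val + 2 ≤ y.val) (h2 : y.val = n - 1 → 1 ≤ x.val) :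
    IsDiag n s(x,y) := by
  have hxn := x.isLt; have hyn := y.isLt
  refine ⟨x, y, rfl, fun h => by have := Fin.val_eq_val x y |>.2 h; omega, ?_, ?_⟩
  · have : (x.val + 1) % n = x.val + 1 := Nat.mod_eq_of_lt (by omega)
    omega
  · rcases Nat.lt_or_ge (y.val + 1) n with h | h
    · rw [Nat.mod_eq_of_lt h]; omega
    · have hy : y.val = n - 1 := by omega
      have : (y.val + 1) % n = 0 := by rw [hy]; simp [Nat.sub_add_cancel (by omega : 1 ≤ n)]
      have := h2 hy
      omega

lemma tri_ext {n : ℕ} {T T' : Triangulation n} (h : T.diags = T'.diags) : T = T' := by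
  cases T; cases T'; simp_all

lemma fanBounds {n : ℕ} (T : Triangulation n) {z a : Fin n} (hz : z.val = 0)
    (hmem : s(z,a) ∈ T.diags) : 2 ≤ a.val ∧ a.val ≤ n - 2 := by
  obtain ⟨x, y, heq, hxy, hyn⟩ := isDiag_sorted (T.isDiag _ hmem)
  rw [Sym2.eq_iff] at heq
  have := y.isLt
  rcases heq with ⟨h1, h2⟩ | ⟨h1, h2⟩
  · have hx : x.val = 0 := by rw [← h1]; exact hz
    have ha : a.val = y.val := by rw [h2]
    omega
  · have hy : y.val = 0 := by rw [← h1]; exact hz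
    omega

lemma sym2_ne {n : ℕ} {a b c d : Fin n} (h1 : a.val ≠ c.val ∨ b.val ≠ d.val)
    (h2 : a.val ≠ d.val ∨ b.val ≠ c.val) : s(a,b) ≠ s(c,d) := by
  intro h
  rw [Sym2.eq_iff] at h
  rcases h with ⟨e1, e2⟩ | ⟨e1, e2⟩
  · exact h1.elim (· (congrArg Fin.val e1)) (· (congrArg Fin.val e2))
  · exact h2.elim (· (congrArg Fin.val e1)) (· (congrArg Fin.val e2))

set_option maxHeartbeats 2000000 in
lemma step {n : ℕ} (hn : 5 ≤ n) (S T : Triangulation n)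
    (z o w : Fin n) (hz : z.val = 0) (ho : o.val = 1) (hw : w.val = n - 1)
    (hS : s(o, w) ∈ S.diags) (hT : Disjoint T.diags S.diags)
    (hlt : (Finset.univ.filter (fun i => s(z, i) ∈ T.diags)).card < n - 3) :
    ∃ T' : Triangulation n, Disjoint T'.diags S.diags ∧ FlipAdj T T' ∧
      (Finset.univ.filter (fun i => s(z, i) ∈ T'.diags)).card
        = (Finset.univ.filter (fun i => s(z, i) ∈ T.diags)).card + 1 := by
  classical
  set A : Finset (Fin n) := Finset.univ.filter (fun i => s(z, i) ∈ T.diags) with hA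
  set P : Finset ℕ := insert 1 (insert (n-1) (A.image Fin.val)) with hP
  have hAP : ∀ a : Fin n, s(z, a) ∈ T.diags → a.val ∈ P := by
    intro a ha
    simp only [hP, Finset.mem_insert, Finset.mem_image]
    exact Or.inr (Or.inr ⟨a, by simp [hA, ha], rfl⟩)
  have hPA : ∀ t, t ∈ P → 2 ≤ t → t ≤ n-2 → ∃ a : Fin n, a.val = t ∧ s(z, a) ∈ T.diags := by
    intro t ht h2 h3
    simp only [hP, Finset.mem_insert, Finset.mem_image] at ht
    rcases ht with rfl | rfl | ⟨a, haA, rfl⟩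
    · omega
    · omega
    · exact ⟨a, rfl, (Finset.mem_filter.1 haA).2⟩
  have hPbound : ∀ t ∈ P, 1 ≤ t ∧ t ≤ n - 1 := by
    intro t ht
    simp only [hP, Finset.mem_insert, Finset.mem_image] at ht
    rcases ht with rfl | rfl | ⟨a, haA, rfl⟩
    · omega
    · omega
    · have := fanBounds T hz (Finset.mem_filter.1 haA).2
      omega
  have hPcard : P.card < n - 1 := by
    calc P.card ≤ (insert (n-1) (A.image Fin.val)).card + 1 := Finset.card_insert_le _ _
    _ ≤ (A.image Fin.val).card + 1 + 1 := by
        have := Finset.card_insert_le (n-1) (A.image Fin.val); omega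
    _ ≤ A.card + 2 := by have := Finset.card_image_le (s := A) (f := Fin.val); omega
    _ < n - 1 := by omega
  obtain ⟨m, hmI, hmP⟩ : ∃ m, m ∈ Finset.Icc 1 (n-1) ∧ m ∉ P := by
    by_contra hc
    push_neg at hc
    have hsub : Finset.Icc 1 (n-1) ⊆ P := fun t ht => hc t ht
    have := Finset.card_le_card hsub
    rw [Nat.card_Icc] at this
    omega
  rw [Finset.mem_Icc] at hmI
  have h1P : (1:ℕ) ∈ P := by simp [hP]
  have hlP : (n-1) ∈ P := by simp [hP]
  have hm1 : m ≠ 1 := fun e => hmP (e ▸ h1P)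
  have hmn : m ≠ n - 1 := fun e => hmP (e ▸ hlP)
  have hpne : (P.filter (· < m)).Nonempty := ⟨1, Finset.mem_filter.2 ⟨h1P, by omega⟩⟩
  have hqne : (P.filter (fun t => m < t)).Nonempty := ⟨n-1, Finset.mem_filter.2 ⟨hlP, by omega⟩⟩
  set p : ℕ := (P.filter (· < m)).max' hpne with hpdef
  set q : ℕ := (P.filter (fun t => m < t)).min' hqne with hqdef
  have hpmem := Finset.mem_filter.1 ((P.filter (· < m)).max'_mem hpne)
  have hqmem := Finset.mem_filter.1 ((P.filter (fun t => m < t)).min'_mem hqne)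
  have hpP : p ∈ P := hpmem.1
  have hqP : q ∈ P := hqmem.1
  have hpm : p < m := hpmem.2
  have hmq : m < q := hqmem.2
  have hp1 : 1 ≤ p := (hPbound p hpP).1
  have hqn : q ≤ n - 1 := (hPbound q hqP).2
  have hgap : ∀ j ∈ P, ¬(p < j ∧ j < q) := by
    rintro j hj ⟨h1, h2⟩
    rcases lt_trichotomy j m with h | rfl | h
    · have : j ≤ p := Finset.le_max' (P.filter (· < m)) j (Finset.mem_filter.2 ⟨hj, h⟩)
      omega
    · exact hmP hj
    · have : q ≤ j := Finset.min'_le (P.filter (fun t => m < t)) j (Finset.mem_filter.2 ⟨hj, h⟩)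
      omega
  have hpq2 : p + 2 ≤ q := by omega
  have hpn : p < n := by omega
  have hqn' : q < n := by omega
  set fp : Fin n := ⟨p, hpn⟩ with hfp
  set fq : Fin n := ⟨q, hqn'⟩ with hfq
  have hfpv : fp.val = p := by rw [hfp]
  have hfqv : fq.val = q := by rw [hfq]
  have hgapD : ∀ j : Fin n, p < j.val → j.val < q → s(z, j) ∉ T.diags :=
    fun j h1 h2 hj => hgap _ (hAP j hj) ⟨h1, h2⟩
  -- Claim 1 : s(fp, fq) ∈ T.diags
  have hpq : s(fp, fq) ∈ T.diags := by
    apply T.maximal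
    · exact isDiag_of (by omega) (by intro h; omega)
    · intro f hf hcross
      obtain ⟨x, y, rfl, hxy2, hyl⟩ := isDiag_sorted (T.isDiag f hf)
      have hyn := y.isLt
      rcases crosses_elim hcross (Fin.lt_def.2 (by omega))
          (Fin.lt_def.2 (by omega)) with ⟨h1, h2, h3⟩ | ⟨h1, h2, h3⟩
      · -- p < x < q < y
        obtain ⟨a, hav, haT⟩ := hPA q hqP (by omega) (by omega)
        exact T.noncross _ haT _ hf
          (crosses_of (Fin.lt_def.2 (by omega)) (Fin.lt_def.2 (by omega))
            (Fin.lt_def.2 (by omega)))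
      · -- x < p < y < q
        rcases Nat.eq_zero_or_pos x.val with hx0 | hx1
        · have hxz : x = z := Fin.ext (by omega)
          exact hgapD y (by omega) (by omega) (hxz ▸ hf)
        · obtain ⟨a, hav, haT⟩ := hPA p hpP (by omega) (by omega)
          exact T.noncross _ haT _ hf
            (crosses_of (Fin.lt_def.2 (by omega)) (Fin.lt_def.2 (by omega))
              (Fin.lt_def.2 (by omega)))
  -- the apex r
  set R : Finset ℕ := (Finset.Ico (p+1) q).filter
      (fun j => j = p + 1 ∨ ∃ hj : j < n, s(fp, (⟨j, hj⟩ : Fin n)) ∈ T.diags) with hR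
  have hRne : R.Nonempty := ⟨p+1, Finset.mem_filter.2 ⟨Finset.mem_Ico.2 ⟨le_refl _, by omega⟩,
    Or.inl rfl⟩⟩
  set r : ℕ := R.max' hRne with hrdef
  have hrmem := Finset.mem_filter.1 (R.max'_mem hRne)
  have hr1 : p + 1 ≤ r := (Finset.mem_Ico.1 hrmem.1).1
  have hr2 : r < q := (Finset.mem_Ico.1 hrmem.1).2
  have hrn : r < n := by omega
  set fr : Fin n := ⟨r, hrn⟩ with hfr
  have hfrv : fr.val = r := by rw [hfr]
  have hrdisj : r = p + 1 ∨ s(fp, fr) ∈ T.diags := by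
    rcases hrmem.2 with h | ⟨hj, h⟩
    · exact Or.inl h
    · exact Or.inr h
  have hr_max : ∀ j : Fin n, p + 1 ≤ j.val → j.val < q →
      (j.val = p + 1 ∨ s(fp, j) ∈ T.diags) → j.val ≤ r := by
    intro j hj1 hj2 hj3
    apply Finset.le_max'
    refine Finset.mem_filter.2 ⟨Finset.mem_Ico.2 ⟨hj1, hj2⟩, ?_⟩
    rcases hj3 with h | h
    · exact Or.inl h
    · exact Or.inr ⟨j.isLt, by convert h⟩
  have hrp2 : 2 ≤ r := by omega
  have hrq2 : r ≤ n - 2 := by omega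
  -- Claim 2 : the right side of the apex triangle
  have hrq : r + 2 ≤ q → s(fr, fq) ∈ T.diags := by
    intro hq2
    apply T.maximal
    · exact isDiag_of (by omega) (by intro h; omega)
    · intro f hf hcross
      obtain ⟨x, y, rfl, hxy2, hyl⟩ := isDiag_sorted (T.isDiag f hf)
      have hyn := y.isLt
      rcases crosses_elim hcross (Fin.lt_def.2 (by omega))
          (Fin.lt_def.2 (by omega)) with ⟨h1, h2, h3⟩ | ⟨h1, h2, h3⟩
      · -- r < x < q < y
        obtain ⟨a, hav, haT⟩ := hPA q hqP (by omega) (by omega)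
        exact T.noncross _ haT _ hf
          (crosses_of (Fin.lt_def.2 (by omega)) (Fin.lt_def.2 (by omega))
            (Fin.lt_def.2 (by omega)))
      · -- x < r < y < q
        rcases Nat.eq_zero_or_pos x.val with hx0 | hx1
        · have hxz : x = z := Fin.ext (by omega)
          exact hgapD y (by omega) (by omega) (hxz ▸ hf)
        · rcases lt_trichotomy x.val p with hxp | hxp | hxp
          · obtain ⟨a, hav, haT⟩ := hPA p hpP (by omega) (by omega)
            exact T.noncross _ haT _ hf
              (crosses_of (Fin.lt_def.2 (by omega)) (Fin.lt_def.2 (by omega))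
                (Fin.lt_def.2 (by omega)))
          · have hxfp : x = fp := Fin.ext (by omega)
            have := hr_max y (by omega) (by omega) (Or.inr (hxfp ▸ hf))
            omega
          · have hrp : r ≠ p + 1 := by omega
            have hfpr : s(fp, fr) ∈ T.diags := hrdisj.resolve_left hrp
            exact T.noncross _ hfpr _ hf
              (crosses_of (Fin.lt_def.2 (by omega)) (Fin.lt_def.2 (by omega))
                (Fin.lt_def.2 (by omega)))
  -- Claim 3
  have hzr_not : s(z, fr) ∉ T.diags := hgapD fr (by omega) (by omega)
  have hzr_diag : IsDiag n s(z, fr) := isDiag_of (by omega) (by intro h; omega)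
  -- Claim 4
  have hnc : ∀ f ∈ T.diags, f ≠ s(fp, fq) → ¬ Crosses n s(z, fr) f := by
    intro f hf hne hcross
    obtain ⟨x, y, rfl, hxy2, hyl⟩ := isDiag_sorted (T.isDiag f hf)
    have hyn := y.isLt
    rcases crosses_elim hcross (Fin.lt_def.2 (by omega))
        (Fin.lt_def.2 (by omega)) with ⟨h1, h2, h3⟩ | ⟨h1, h2, h3⟩
    · -- 0 < x < r < y
      rcases lt_trichotomy x.val p with hxp | hxp | hxp
      · obtain ⟨a, hav, haT⟩ := hPA p hpP (by omega) (by omega)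
        exact T.noncross _ haT _ hf
          (crosses_of (Fin.lt_def.2 (by omega)) (Fin.lt_def.2 (by omega))
            (Fin.lt_def.2 (by omega)))
      · have hxfp : x = fp := Fin.ext (by omega)
        rcases lt_trichotomy y.val q with hyq | hyq | hyq
        · have := hr_max y (by omega) (by omega) (Or.inr (hxfp ▸ hf))
          omega
        · have hyfq : y = fq := Fin.ext (by omega)
          exact hne (by rw [hxfp, hyfq])
        · obtain ⟨a, hav, haT⟩ := hPA q hqP (by omega) (by omega)
          exact T.noncross _ haT _ hf
            (crosses_of (Fin.lt_def.2 (by omega)) (Fin.lt_def.2 (by omega))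
              (Fin.lt_def.2 (by omega)))
      · have hrp : r ≠ p + 1 := by omega
        have hfpr : s(fp, fr) ∈ T.diags := hrdisj.resolve_left hrp
        exact T.noncross _ hfpr _ hf
          (crosses_of (Fin.lt_def.2 (by omega)) (Fin.lt_def.2 (by omega))
            (Fin.lt_def.2 (by omega)))
    · omega
  -- the new triangulation
  set D' : Finset (Sym2 (Fin n)) := insert s(z, fr) (T.diags.erase s(fp, fq)) with hD'
  have hnew_ne : s(z, fr) ≠ s(fp, fq) := sym2_ne (Or.inl (by omega)) (Or.inl (by omega))
  have hmemD' : ∀ f, f ∈ D' ↔ f = s(z, fr) ∨ (f ≠ s(fp, fq) ∧ f ∈ T.diags) := by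
    intro f
    simp [hD', Finset.mem_insert, Finset.mem_erase]
  have hT'isDiag : ∀ d ∈ D', IsDiag n d := by
    intro d hd
    rcases (hmemD' d).1 hd with rfl | ⟨_, hd⟩
    · exact hzr_diag
    · exact T.isDiag d hd
  have hT'noncross : ∀ d ∈ D', ∀ e ∈ D', ¬ Crosses n d e := by
    intro d hd e he
    rcases (hmemD' d).1 hd with rfl | ⟨hd1, hd2⟩ <;> rcases (hmemD' e).1 he with rfl | ⟨he1, he2⟩
    · intro hcr
      rcases crosses_elim hcr (Fin.lt_def.2 (by omega))
        (Fin.lt_def.2 (by omega)) with ⟨h1, h2, h3⟩ | ⟨h1, h2, h3⟩ <;> omega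
    · exact hnc e he2 he1
    · exact fun hcr => hnc d hd2 hd1 (crosses_comm hcr)
    · exact T.noncross d hd2 e he2
  have hT'maximal : ∀ g, IsDiag n g → (∀ e ∈ D', ¬ Crosses n g e) → g ∈ D' := by
    intro g hg hgnc
    obtain ⟨x, y, rfl, hxy2, hyl⟩ := isDiag_sorted hg
    have hyn := y.isLt
    by_cases hall : ∀ f ∈ T.diags, ¬ Crosses n s(x,y) f
    · have hgT := T.maximal _ hg hall
      by_cases hgpq : s(x,y) = s(fp, fq)
      · exfalso
        apply hgnc s(z, fr) ((hmemD' _).2 (Or.inl rfl))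
        rw [hgpq]
        exact crosses_comm (crosses_of (Fin.lt_def.2 (by omega))
          (Fin.lt_def.2 (by omega)) (Fin.lt_def.2 (by omega)))
      · exact (hmemD' _).2 (Or.inr ⟨hgpq, hgT⟩)
    · push_neg at hall
      obtain ⟨f, hfT, hcf⟩ := hall
      have hfpq : f = s(fp, fq) := by
        by_contra hne
        exact hgnc f ((hmemD' _).2 (Or.inr ⟨hne, hfT⟩)) hcf
      rw [hfpq] at hcf
      rcases crosses_elim hcf (Fin.lt_def.2 (by omega))
          (Fin.lt_def.2 (by omega)) with ⟨h1, h2, h3⟩ | ⟨h1, h2, h3⟩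
      · -- x < p < y < q
        rcases Nat.eq_zero_or_pos x.val with hx0 | hx1
        · have hxz : x = z := Fin.ext (by omega)
          rcases lt_trichotomy y.val r with hyr | hyr | hyr
          · have hrp : r ≠ p + 1 := by omega
            have hfpr : s(fp, fr) ∈ T.diags := hrdisj.resolve_left hrp
            exfalso
            apply hgnc s(fp, fr) ((hmemD' _).2 (Or.inr
              ⟨sym2_ne (Or.inr (by omega)) (Or.inl (by omega)), hfpr⟩))
            rw [hxz]
            exact crosses_of (Fin.lt_def.2 (by omega))
              (Fin.lt_def.2 (by omega)) (Fin.lt_def.2 (by omega))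
          · have hyfr : y = fr := Fin.ext (by omega)
            rw [hxz, hyfr]
            exact (hmemD' _).2 (Or.inl rfl)
          · have hq2 : r + 2 ≤ q := by omega
            have hfrq : s(fr, fq) ∈ T.diags := hrq hq2
            exfalso
            apply hgnc s(fr, fq) ((hmemD' _).2 (Or.inr
              ⟨sym2_ne (Or.inl (by omega)) (Or.inr (by omega)), hfrq⟩))
            rw [hxz]
            exact crosses_of (Fin.lt_def.2 (by omega))
              (Fin.lt_def.2 (by omega)) (Fin.lt_def.2 (by omega))
        · obtain ⟨a, hav, haT⟩ := hPA p hpP (by omega) (by omega)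
          exfalso
          apply hgnc s(z, a) ((hmemD' _).2 (Or.inr
            ⟨sym2_ne (Or.inl (by omega)) (Or.inl (by omega)), haT⟩))
          exact crosses_comm (crosses_of (Fin.lt_def.2 (by omega))
            (Fin.lt_def.2 (by omega)) (Fin.lt_def.2 (by omega)))
      · -- p < x < q < y
        obtain ⟨a, hav, haT⟩ := hPA q hqP (by omega) (by omega)
        exfalso
        apply hgnc s(z, a) ((hmemD' _).2 (Or.inr
          ⟨sym2_ne (Or.inl (by omega)) (Or.inl (by omega)), haT⟩))
        exact crosses_comm (crosses_of (Fin.lt_def.2 (by omega))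
          (Fin.lt_def.2 (by omega)) (Fin.lt_def.2 (by omega)))
  refine ⟨⟨D', hT'isDiag, hT'noncross, hT'maximal⟩, ?_, ?_, ?_⟩
  · rw [Finset.disjoint_left]
    intro e he heS
    rcases (hmemD' e).1 he with rfl | ⟨_, heT⟩
    · exact S.noncross _ heS _ hS
        (crosses_of (Fin.lt_def.2 (by omega)) (Fin.lt_def.2 (by omega))
          (Fin.lt_def.2 (by omega)))
    · exact (Finset.disjoint_left.1 hT heT) heS
  · refine ⟨s(fp, fq), hpq, ?_, ?_⟩
    · intro hmem
      rcases (hmemD' _).1 hmem with h | ⟨h, _⟩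
      · exact hnew_ne h.symm
      · exact h rfl
    · intro e he hne
      exact (hmemD' _).2 (Or.inr ⟨hne, he⟩)
  · show (Finset.univ.filter (fun i => s(z, i) ∈ D')).card = A.card + 1
    have hset : (Finset.univ.filter (fun i => s(z, i) ∈ D')) = insert fr A := by
      ext i
      simp only [Finset.mem_filter, Finset.mem_univ, true_and, Finset.mem_insert, hA]
      rw [hmemD']
      constructor
      · rintro (h | ⟨_, h⟩)
        · rw [Sym2.eq_iff] at h
          rcases h with ⟨_, h2⟩ | ⟨h1, _⟩
          · exact Or.inl h2
          · exfalso; have := congrArg Fin.val h1; omega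
        · exact Or.inr (by simpa using h)
      · rintro (rfl | h)
        · exact Or.inl rfl
        · exact Or.inr ⟨sym2_ne (Or.inl (by omega)) (Or.inl (by omega)), by simpa using h⟩
    rw [hset]
    rw [Finset.card_insert_of_notMem (by simp [hA]; exact hzr_not)]

lemma cardA_le {n : ℕ} (hn : 5 ≤ n) (T : Triangulation n) (z : Fin n) (hz : z.val = 0) :
    (Finset.univ.filter (fun i => s(z, i) ∈ T.diags)).card ≤ n - 3 := by
  classical
  set A : Finset (Fin n) := Finset.univ.filter (fun i => s(z, i) ∈ T.diags) with hA
  have hsub : A.image Fin.val ⊆ Finset.Icc 2 (n-2) := by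
    intro t ht
    obtain ⟨a, haA, rfl⟩ := Finset.mem_image.1 ht
    have := fanBounds T hz (Finset.mem_filter.1 haA).2
    exact Finset.mem_Icc.2 this
  have h1 : (A.image Fin.val).card = A.card :=
    Finset.card_image_of_injective _ Fin.val_injective
  have h2 := Finset.card_le_card hsub
  rw [Nat.card_Icc] at h2
  omega

lemma base_case {n : ℕ} (hn : 5 ≤ n) (T : Triangulation n) (z : Fin n) (hz : z.val = 0)
    (hcard : (Finset.univ.filter (fun i => s(z, i) ∈ T.diags)).card = n - 3) :
    ∀ e, e ∈ T.diags ↔ ∃ i : Fin n, 2 ≤ i.val ∧ i.val ≤ n - 2 ∧ e = s(z, i) := by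
  classical
  set A : Finset (Fin n) := Finset.univ.filter (fun i => s(z, i) ∈ T.diags) with hA
  have hsub : A.image Fin.val ⊆ Finset.Icc 2 (n-2) := by
    intro t ht
    obtain ⟨a, haA, rfl⟩ := Finset.mem_image.1 ht
    have := fanBounds T hz (Finset.mem_filter.1 haA).2
    exact Finset.mem_Icc.2 this
  have h1 : (A.image Fin.val).card = A.card :=
    Finset.card_image_of_injective _ Fin.val_injective
  have heq : A.image Fin.val = Finset.Icc 2 (n-2) := by
    apply Finset.eq_of_subset_of_card_le hsub
    rw [Nat.card_Icc, h1, hcard]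
    omega
  have hIcc : ∀ j, 2 ≤ j → j ≤ n - 2 → ∃ a : Fin n, a.val = j ∧ s(z, a) ∈ T.diags := by
    intro j hj1 hj2
    have : j ∈ A.image Fin.val := heq ▸ Finset.mem_Icc.2 ⟨hj1, hj2⟩
    obtain ⟨a, haA, rfl⟩ := Finset.mem_image.1 this
    exact ⟨a, rfl, (Finset.mem_filter.1 haA).2⟩
  intro e
  constructor
  · intro he
    obtain ⟨x, y, rfl, hxy2, hyl⟩ := isDiag_sorted (T.isDiag e he)
    have hyn := y.isLt
    rcases Nat.eq_zero_or_pos x.val with hx0 | hx1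
    · have hxz : x = z := Fin.ext (by omega)
      refine ⟨y, by omega, ?_, by rw [hxz]⟩
      rcases Nat.lt_or_ge y.val (n-1) with h | h
      · omega
      · have := hyl (by omega); omega
    · exfalso
      obtain ⟨a, hav, haT⟩ := hIcc (x.val + 1) (by omega) (by omega)
      exact T.noncross _ haT _ he
        (crosses_of (Fin.lt_def.2 (by omega)) (Fin.lt_def.2 (by omega))
          (Fin.lt_def.2 (by omega)))
  · rintro ⟨i, h2, h3, rfl⟩
    obtain ⟨a, hav, haT⟩ := hIcc i.val h2 h3
    have : a = i := Fin.ext hav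
    exact this ▸ haT

lemma reach {n : ℕ} (hn : 5 ≤ n) (S : Triangulation n)
    (z o w : Fin n) (hz : z.val = 0) (ho : o.val = 1) (hw : w.val = n - 1)
    (hS : s(o, w) ∈ S.diags)
    (Δ : Triangulation n)
    (hΔ : ∀ e, e ∈ Δ.diags ↔ ∃ i : Fin n, 2 ≤ i.val ∧ i.val ≤ n - 2 ∧ e = s(z, i))
    (hΔS : Disjoint Δ.diags S.diags) :
    ∀ k : ℕ, ∀ T : Triangulation n, ∀ hT : Disjoint T.diags S.diags,
      n - 3 - (Finset.univ.filter (fun i => s(z, i) ∈ T.diags)).card ≤ k →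
      ∃ wk : (TnS n S).Walk ⟨T, hT⟩ ⟨Δ, hΔS⟩,
        wk.length ≤ n - 3 - (Finset.univ.filter (fun i => s(z, i) ∈ T.diags)).card := by
  classical
  have hbase : ∀ T : Triangulation n, ∀ hT : Disjoint T.diags S.diags,
      (Finset.univ.filter (fun i => s(z, i) ∈ T.diags)).card = n - 3 →
      ∃ wk : (TnS n S).Walk ⟨T, hT⟩ ⟨Δ, hΔS⟩,
        wk.length ≤ n - 3 - (Finset.univ.filter (fun i => s(z, i) ∈ T.diags)).card := by
    intro T hT hc
    have hTd : T.diags = Δ.diags := Finset.ext (fun e => by rw [base_case hn T z hz hc e, hΔ e])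
    have hTe : T = Δ := tri_ext hTd
    have hst : (⟨T, hT⟩ : TnSVert n S) = ⟨Δ, hΔS⟩ := Subtype.ext hTe
    exact ⟨(SimpleGraph.Walk.nil).copy hst.symm rfl,
      (SimpleGraph.Walk.length_copy _ _ _).trans_le
        (SimpleGraph.Walk.length_nil.le.trans (Nat.zero_le _))⟩
  intro k
  induction k with
  | zero =>
    intro T hT hk
    have hle := cardA_le hn T z hz
    exact hbase T hT (by omega)
  | succ k ih =>
    intro T hT hk
    have hle := cardA_le hn T z hz
    by_cases hc : (Finset.univ.filter (fun i => s(z, i) ∈ T.diags)).card = n - 3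
    · exact hbase T hT hc
    · have hlt : (Finset.univ.filter (fun i => s(z, i) ∈ T.diags)).card < n - 3 := by omega
      obtain ⟨T', hT'S, hflip, hcard'⟩ := step hn S T z o w hz ho hw hS hT hlt
      have hadj : (TnS n S).Adj ⟨T, hT⟩ ⟨T', hT'S⟩ := by
        refine ⟨?_, Or.inl hflip⟩
        intro hEq
        obtain ⟨d0, hd1, hd2, _⟩ := hflip
        have hTT : T = T' := congrArg Subtype.val hEq
        exact hd2 (hTT ▸ hd1)
      obtain ⟨w', hw'⟩ := ih T' hT'S (by omega)
      refine ⟨SimpleGraph.Walk.cons hadj w', ?_⟩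
      exact (SimpleGraph.Walk.length_cons hadj w').trans_le (by omega)

set_option maxHeartbeats 1600000 in
/-- Let `n ≥ 5`, let `S` be a triangulation of the convex
`n`-gon containing the diagonal `(2, n)` (labels `1,…,n` correspond to
`Fin n` indices `0,…,n-1`, so this is `s(1, n-1)` as indices), and let `Δ` be
the fan triangulation `{(1,i) : 3 ≤ i ≤ n-1}` (indices `s(0, i)` for
`2 ≤ i ≤ n-2`). Then every triangulation `T` disjoint from `S` containing
exactly `d` diagonals of the form `(1, i)` is connected to `Δ` inside the flip
graph `T_n(S)` of triangulations disjoint from `S` by a path of length at most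
`n - 3 - d`. -/
theorem fan_reachable_in_TnS (n : ℕ) (hn : 5 ≤ n) (S : Triangulation n)
    (hS : s((⟨1, by omega⟩ : Fin n), (⟨n - 1, by omega⟩ : Fin n)) ∈ S.diags)
    (Δ : Triangulation n)
    (hΔ : ∀ e, e ∈ Δ.diags ↔
      ∃ i : Fin n, 2 ≤ i.val ∧ i.val ≤ n - 2 ∧ e = s((⟨0, by omega⟩ : Fin n), i))
    (T : Triangulation n) (hT : Disjoint T.diags S.diags)
    (d : ℕ)
    (hd : d = Set.ncard {e | e ∈ T.diags ∧ (⟨0, by omega⟩ : Fin n) ∈ e}) :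
    ∃ (hΔS : Disjoint Δ.diags S.diags)
      (w : (TnS n S).Walk ⟨T, hT⟩ ⟨Δ, hΔS⟩), w.length ≤ n - 3 - d := by
  classical
  set z : Fin n := ⟨0, by omega⟩ with hzdef
  set o : Fin n := ⟨1, by omega⟩ with hodef
  set lw : Fin n := ⟨n - 1, by omega⟩ with hwdef
  have hzv : z.val = 0 := rfl
  have hov : o.val = 1 := rfl
  have hwv : lw.val = n - 1 := rfl
  have hΔS : Disjoint Δ.diags S.diags := by
    rw [Finset.disjoint_left]
    intro e he heS
    obtain ⟨i, h2, h3, rfl⟩ := (hΔ e).1 he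
    exact S.noncross _ heS _ hS
      (crosses_of (Fin.lt_def.2 (by omega)) (Fin.lt_def.2 (by omega))
        (Fin.lt_def.2 (by omega)))
  have hcard : d = (Finset.univ.filter (fun i => s(z, i) ∈ T.diags)).card := by
    rw [hd]
    have hsetEq : {e | e ∈ T.diags ∧ z ∈ e} = ↑(T.diags.filter (fun e => z ∈ e)) := by
      ext e; simp
    rw [hsetEq, Set.ncard_coe_finset]
    symm
    apply Finset.card_bij (fun (a : Fin n) (_ : a ∈ Finset.univ.filter
      (fun i => s(z, i) ∈ T.diags)) => s(z, a))
    · intro a ha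
      refine Finset.mem_filter.2 ⟨(Finset.mem_filter.1 ha).2, ?_⟩
      exact Sym2.mem_mk_left z a
    · intro a1 ha1 a2 ha2 h
      rw [Sym2.eq_iff] at h
      rcases h with ⟨_, h2⟩ | ⟨h1, h2⟩
      · exact h2
      · exact h2.trans h1
    · intro e he
      have he' := Finset.mem_filter.1 he
      obtain ⟨b, hb⟩ : ∃ b, e = s(z, b) := ⟨Sym2.Mem.other he'.2, (Sym2.other_spec he'.2).symm⟩
      refine ⟨b, Finset.mem_filter.2 ⟨Finset.mem_univ _, ?_⟩, hb.symm⟩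
      rw [← hb]; exact he'.1
  obtain ⟨wk, hwk⟩ := reach hn S z o lw hzv hov hwv hS Δ hΔ hΔS (n - 3) T hT (by omega)
  exact ⟨hΔS, wk, by omega⟩
end
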